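/- Let (X,d) be a metric space and ξ a doubling gauge function on balls, i.e., there exists D ≥ 1 such that for any two balls B', B with B' ∩ B ≠ ∅ and rad(B') ≤ rad(B) ≤ 2 rad(B'), one has D⁻¹ ξ(B') ≤ ξ(B) ≤ D ξ(B'). Suppose X is metrically doubling. Then for every τ ≥ 1 there exists a constant C(τ) > 0, depending only on D and the metric doubling constant, such that for every set K ⊂ X and every r > 0, the ξ-Hausdorff content at scale r satisfies H^ξ_r(K) ≤ C(τ) · H^ξ_{τr}(K). -/

import Mathlib

open Metric Set MeasureTheory ENNReal

noncomputable section

namespace Paper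

variable {X : Type*}

/-- The subcollection of balls (center, radius pairs) whose ball meets `A`. -/
def restr [MetricSpace X] (C : Set (X × ℝ)) (A : Set X) : Set (X × ℝ) :=
  {B ∈ C | (Metric.ball B.1 B.2 ∩ A).Nonempty}

/-- Total gauge mass of a collection of balls. -/
def gaugeSum (ξ : X → ℝ → ℝ≥0∞) (C : Set (X × ℝ)) : ℝ≥0∞ :=
  ∑' B : C, ξ (B : X × ℝ).1 (B : X × ℝ).2

/-- Hausdorff content at scale `r` with respect to a gauge `ξ`. -/
def gaugeContent [MetricSpace X] (ξ : X → ℝ → ℝ≥0∞) (r : ℝ) (A : Set X) : ℝ≥0∞ :=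
  ⨅ (C : Set (X × ℝ)) (_ : C.Countable) (_ : ∀ B ∈ C, 0 < B.2 ∧ B.2 ≤ r)
    (_ : A ⊆ ⋃ B ∈ C, Metric.ball B.1 B.2), gaugeSum ξ C

/-- A doubling gauge function with constant `D`. -/
def DoublingGauge [MetricSpace X] (ξ : X → ℝ → ℝ≥0∞) (D : ℝ≥0∞) : Prop :=
  (∀ (x : X) (r : ℝ), 0 < r → 0 < ξ x r ∧ ξ x r < ⊤) ∧
  ∀ (x x' : X) (r r' : ℝ), 0 < r' → r' ≤ r → r ≤ 2 * r' →
    (Metric.ball x' r' ∩ Metric.ball x r).Nonempty →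
    ξ x' r' ≤ D * ξ x r ∧ ξ x r ≤ D * ξ x' r'

/-- `X` is metrically `N`-doubling: every ball of radius `r` contains at most `N`
pairwise `r/2`-separated points. -/
def MetricDoubling (X : Type*) [MetricSpace X] (N : ℕ) : Prop :=
  ∀ (x : X) (r : ℝ) (S : Finset X), (↑S ⊆ Metric.ball x r) →
    (∀ y ∈ S, ∀ z ∈ S, y ≠ z → r / 2 ≤ dist y z) → S.card ≤ N

/-- `μ` is a doubling measure with constant `D`. -/
def DoublingMeasure [MetricSpace X] [MeasurableSpace X] (μ : Measure X) (D : ℝ≥0∞) : Prop :=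
  ∀ (x : X) (r : ℝ), 0 < r →
    0 < μ (Metric.ball x r) ∧ μ (Metric.ball x r) < ⊤ ∧
    μ (Metric.ball x (2 * r)) ≤ D * μ (Metric.ball x r)

/-- The codimension-`q` gauge `h_q(B) = μ(B)/rad(B)^q`. -/
def hGauge [MetricSpace X] [MeasurableSpace X] (μ : Measure X) (q : ℝ) (x : X) (r : ℝ) : ℝ≥0∞ :=
  μ (Metric.ball x r) / ENNReal.ofReal (r ^ q)

/-- Total `h_q` mass of a collection of balls. -/
def hSum [MetricSpace X] [MeasurableSpace X] (μ : Measure X) (q : ℝ) (C : Set (X × ℝ)) : ℝ≥0∞ :=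
  ∑' B : C, hGauge μ q (B : X × ℝ).1 (B : X × ℝ).2

/-- `ξ` has codimension at least `Q` (with constant `K`). -/
def HasCodimAtLeast [MetricSpace X] [MeasurableSpace X] (ξ : X → ℝ → ℝ≥0∞)
    (μ : Measure X) (Q : ℝ) (K : ℝ≥0∞) : Prop :=
  ∀ (x : X) (r R : ℝ), 0 < r → r ≤ R →
    ξ x R / ξ x r ≤ K * (hGauge μ Q x R / hGauge μ Q x r)

/-- `X` is a geodesic space: any two points are joined by a curve of length `dist x y`. -/
def GeodesicSpace (X : Type*) [MetricSpace X] : Prop :=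
  ∀ x y : X, ∃ γ : ℝ → X, γ 0 = x ∧ γ 1 = y ∧ ContinuousOn γ (Set.Icc 0 1) ∧
    eVariationOn γ (Set.Icc 0 1) = ENNReal.ofReal (dist x y)

/-- A `c`-John curve on the parameter interval `[a, b]`: every tail subcurve from `γ t`
has length at most `c · d(γ t, ∂Ω)`. -/
def IsJohnCurve [MetricSpace X] (Ω : Set X) (c : ℝ) (γ : ℝ → X) (a b : ℝ) : Prop :=
  ContinuousOn γ (Set.Icc a b) ∧ eVariationOn γ (Set.Icc a b) < ⊤ ∧
  ∀ t ∈ Set.Icc a b, eVariationOn γ (Set.Icc t b) ≤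
    ENNReal.ofReal (c * Metric.infDist (γ t) (frontier Ω))

/-- The `c`-accessible boundary of `Ω` from `x₀`. -/
def accBoundary [MetricSpace X] (Ω : Set X) (x₀ : X) (c : ℝ) : Set X :=
  {w ∈ frontier Ω | ∃ γ : ℝ → X, γ 0 = x₀ ∧ γ 1 = w ∧ IsJohnCurve Ω c γ 0 1}

/-- `g = sup_{B ∈ ℬ} (1/rad B) · 1_{2B}`. -/
def ballSup [MetricSpace X] (ℬ : Set (X × ℝ)) : X → ℝ≥0∞ :=
  fun w => ⨆ (B : ℬ) (_ : w ∈ Metric.ball (B : X × ℝ).1 (2 * (B : X × ℝ).2)),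
    (ENNReal.ofReal (B : X × ℝ).2)⁻¹

/-- The restricted (uncentered) maximal function at scale `s`. -/
def restrMax [MetricSpace X] [MeasurableSpace X] (μ : Measure X) (g : X → ℝ≥0∞)
    (s : ℝ) (x : X) : ℝ≥0∞ :=
  ⨆ (z : X) (ρ : ℝ) (_ : 0 < ρ) (_ : ρ < s) (_ : x ∈ Metric.ball z ρ),
    (∫⁻ w in Metric.ball z ρ, g w ∂μ) / μ (Metric.ball z ρ)

/-- `g` is an upper gradient of `f`: the upper gradient inequality holds along all
unit-speed (1-Lipschitz) curves. -/
def IsUpperGradient [MetricSpace X] (f : X → ℝ) (g : X → ℝ≥0∞) : Prop :=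
  ∀ (L : ℝ) (γ : ℝ → X), 0 ≤ L → LipschitzOnWith 1 γ (Set.Icc 0 L) →
    ENNReal.ofReal |f (γ L) - f (γ 0)| ≤ ∫⁻ t in Set.Icc 0 L, g (γ t)

/-- The `p`-Poincaré inequality with constants `CP, lam`. -/
def PoincareIneq [MetricSpace X] [MeasurableSpace X] (μ : Measure X)
    (p CP lam : ℝ) : Prop :=
  ∀ (f : X → ℝ) (g : X → ℝ≥0∞), MeasureTheory.LocallyIntegrable f μ → Measurable g →
    IsUpperGradient f g →
    ∀ (x : X) (r : ℝ), 0 < r →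
      ⨍ y in Metric.ball x r, |f y - ⨍ w in Metric.ball x r, f w ∂μ| ∂μ ≤
        CP * r * (((∫⁻ w in Metric.ball x (lam * r), g w ^ p ∂μ) /
          μ (Metric.ball x (lam * r))).toReal) ^ (1 / p)

/-- The pointwise `p`-Poincaré inequality with constants `(CP, L, lam)`. -/
def PointwisePoincare [MetricSpace X] [MeasurableSpace X] (μ : Measure X)
    (p CP L lam : ℝ) : Prop :=
  ∀ (x y : X) (g : X → ℝ≥0∞), Measurable g →
    (⨅ (ℓ : ℝ) (γ : ℝ → X) (_ : 0 ≤ ℓ) (_ : ℓ ≤ L * dist x y)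
        (_ : LipschitzOnWith 1 γ (Set.Icc 0 ℓ)) (_ : γ 0 = x) (_ : γ ℓ = y)
        (_ : ∀ t ∈ Set.Icc 0 ℓ, γ t ∈ Metric.ball x (2 * lam * dist x y)),
        ∫⁻ t in Set.Icc 0 ℓ, g (γ t)) ≤
      ENNReal.ofReal (CP * dist x y) *
        (restrMax μ (fun w => g w ^ p) (lam * dist x y) x +
         restrMax μ (fun w => g w ^ p) (lam * dist x y) y) ^ (1 / p)

/-- The `s`-dimensional Hausdorff content (at scale `∞`). -/
def sContent {Y : Type*} [MetricSpace Y] (s : ℝ) (A : Set Y) : ℝ≥0∞ :=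
  ⨅ (t : ℕ → Set Y) (_ : A ⊆ ⋃ n, t n), ∑' n, EMetric.diam (t n) ^ s

end Paper

section Aux

open Classical in
/-- One covering step: a ball of radius `s` is covered by at most `N` balls of
radius `s/2` centered inside it. -/
lemma aux_cover_step {X : Type*} [MetricSpace X] {N : ℕ} (hX : Paper.MetricDoubling X N)
    (x : X) (s : ℝ) (hs : 0 < s) :
    ∃ F : Finset X, F.card ≤ N ∧ ↑F ⊆ Metric.ball x s ∧
      Metric.ball x s ⊆ ⋃ y ∈ F, Metric.ball y (s / 2) := by
  set P : Finset X → Prop := fun F => ↑F ⊆ Metric.ball x s ∧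
    ∀ y ∈ F, ∀ z ∈ F, y ≠ z → s / 2 ≤ dist y z with hP
  set Q : ℕ → Prop := fun m => ∃ F : Finset X, P F ∧ F.card = m with hQ
  have hQ0 : Q 0 := ⟨∅, ⟨by simp, by simp⟩, rfl⟩
  have hcard : ∀ F, P F → F.card ≤ N := fun F hF => hX x s F hF.1 hF.2
  obtain ⟨F, hPF, hFcard⟩ := Nat.findGreatest_spec (Nat.zero_le N) hQ0
  refine ⟨F, hcard F hPF, hPF.1, ?_⟩
  intro z hz
  by_contra hzc
  have hzsep : ∀ y ∈ F, s / 2 ≤ dist z y := by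
    intro y hy
    by_contra hlt
    push_neg at hlt
    exact hzc (Set.mem_biUnion hy (Metric.mem_ball.mpr hlt))
  have hzF : z ∉ F := by
    intro hzF
    have := hzsep z hzF
    simp at this
    linarith
  have hP' : P (insert z F) := by
    constructor
    · intro w hw
      rcases Finset.mem_insert.mp (by exact_mod_cast hw) with rfl | hw'
      · exact hz
      · exact hPF.1 hw'
    · intro y hy w hw hyw
      rcases Finset.mem_insert.mp hy with rfl | hy' <;>
        rcases Finset.mem_insert.mp hw with rfl | hw'
      · exact absurd rfl hyw
      · exact hzsep w hw'
      · exact (dist_comm y w ▸ hzsep y hy')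
      · exact hPF.2 y hy' w hw' hyw
  have hQ' : Q (F.card + 1) := ⟨insert z F, hP', Finset.card_insert_of_notMem hzF⟩
  have hle : (insert z F).card ≤ N := hcard _ hP'
  rw [Finset.card_insert_of_notMem hzF] at hle
  have h1 : F.card + 1 ≤ Nat.findGreatest Q N := Nat.le_findGreatest hle hQ'
  omega

/-- Iterated covering with gauge control. -/
lemma aux_cover_iter {X : Type*} [MetricSpace X] {N : ℕ} (hX : Paper.MetricDoubling X N)
    {D : ℝ≥0∞} (ξ : X → ℝ → ℝ≥0∞) (hξ : Paper.DoublingGauge ξ D)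
    (k : ℕ) (x : X) (s : ℝ) (hs : 0 < s) :
    ∃ F : Finset X, F.card ≤ N ^ k ∧
      Metric.ball x s ⊆ ⋃ y ∈ F, Metric.ball y (s / 2 ^ k) ∧
      ∀ y ∈ F, ξ y (s / 2 ^ k) ≤ D ^ k * ξ x s := by
  induction k with
  | zero =>
    refine ⟨{x}, by simp, ?_, ?_⟩
    · simp
    · intro y hy
      simp only [Finset.mem_singleton] at hy
      subst hy
      simp
  | succ k ih =>
    obtain ⟨F, hFcard, hFcov, hFg⟩ := ih
    have hpos : 0 < s / 2 ^ k := by positivity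
    classical
    choose G hG using fun y : X => aux_cover_step hX y (s / 2 ^ k) hpos
    refine ⟨F.biUnion G, ?_, ?_, ?_⟩
    · calc (F.biUnion G).card ≤ ∑ y ∈ F, (G y).card := Finset.card_biUnion_le
        _ ≤ F.card • N := Finset.sum_le_card_nsmul _ _ _ (fun y _ => (hG y).1)
        _ = F.card * N := smul_eq_mul ..
        _ ≤ N ^ k * N := Nat.mul_le_mul_right _ hFcard
        _ = N ^ (k + 1) := (pow_succ N k).symm
    · intro z hz
      obtain ⟨y, hy, hzy⟩ := Set.mem_iUnion₂.mp (hFcov hz)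
      obtain ⟨w, hw, hzw⟩ := Set.mem_iUnion₂.mp ((hG y).2.2 hzy)
      refine Set.mem_iUnion₂.mpr ⟨w, Finset.mem_biUnion.mpr ⟨y, hy, hw⟩, ?_⟩
      have : s / 2 ^ k / 2 = s / 2 ^ (k + 1) := by ring
      rwa [this] at hzw
    · intro w hw
      obtain ⟨y, hy, hwG⟩ := Finset.mem_biUnion.mp hw
      have hwball : w ∈ Metric.ball y (s / 2 ^ k) := (hG y).2.1 hwG
      have hstep : ξ w (s / 2 ^ (k + 1)) ≤ D * ξ y (s / 2 ^ k) := by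
        have h1 : 0 < s / 2 ^ (k + 1) := by positivity
        have h2 : s / 2 ^ (k + 1) ≤ s / 2 ^ k := by
          apply div_le_div_of_nonneg_left hs.le (by positivity)
          exact pow_le_pow_right₀ one_le_two (Nat.le_succ k)
        have h3 : s / 2 ^ k ≤ 2 * (s / 2 ^ (k + 1)) := by
          rw [show (2 : ℝ) * (s / 2 ^ (k + 1)) = s / 2 ^ k by ring]
        have h4 : (Metric.ball w (s / 2 ^ (k + 1)) ∩ Metric.ball y (s / 2 ^ k)).Nonempty :=
          ⟨w, Metric.mem_ball_self h1, hwball⟩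
        exact (hξ.2 y w (s / 2 ^ k) (s / 2 ^ (k + 1)) h1 h2 h3 h4).1
      calc ξ w (s / 2 ^ (k + 1)) ≤ D * ξ y (s / 2 ^ k) := hstep
        _ ≤ D * (D ^ k * ξ x s) := mul_le_mul_right (hFg y hy) D
        _ = D ^ (k + 1) * ξ x s := by rw [pow_succ, mul_comm (D ^ k) D, mul_assoc]

end Aux

theorem sharp_content_scale_change {X : Type*} [MetricSpace X]
    (N : ℕ) (hX : Paper.MetricDoubling X N)
    (D : ℝ≥0∞) (hD : 1 ≤ D) (hDt : D < ⊤) (τ : ℝ) (hτ : 1 ≤ τ) :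
    ∃ C : ℝ≥0∞, 0 < C ∧ C < ⊤ ∧
      ∀ ξ : X → ℝ → ℝ≥0∞, Paper.DoublingGauge ξ D →
        ∀ (K : Set X) (r : ℝ), 0 < r →
          Paper.gaugeContent ξ r K ≤ C * Paper.gaugeContent ξ (τ * r) K := by
  obtain ⟨k, hk⟩ := pow_unbounded_of_one_lt τ (one_lt_two : (1 : ℝ) < 2)
  set C : ℝ≥0∞ := ((N : ℝ≥0∞) + 1) ^ k * D ^ k with hC
  have hD0 : D ≠ 0 := by rintro rfl; simp at hD
  have hC0 : C ≠ 0 := mul_ne_zero (pow_ne_zero _ (by simp)) (pow_ne_zero _ hD0)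
  have hCt : C ≠ ⊤ := ENNReal.mul_ne_top
    (ENNReal.pow_ne_top (ENNReal.add_ne_top.mpr ⟨ENNReal.natCast_ne_top N, ENNReal.one_ne_top⟩))
    (ENNReal.pow_ne_top hDt.ne)
  refine ⟨C, pos_iff_ne_zero.mpr hC0, hCt.lt_top, ?_⟩
  intro ξ hξ K r hr
  have key : ∀ Cb : Set (X × ℝ), Cb.Countable → (∀ B ∈ Cb, 0 < B.2 ∧ B.2 ≤ τ * r) →
      (K ⊆ ⋃ B ∈ Cb, Metric.ball B.1 B.2) →
      Paper.gaugeContent ξ r K ≤ C * Paper.gaugeSum ξ Cb := by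
    intro Cb hcnt hrad hcov
    have hex : ∀ B : X × ℝ, ∃ F : Finset X, 0 < B.2 →
        F.card ≤ N ^ k ∧
        Metric.ball B.1 B.2 ⊆ ⋃ y ∈ F, Metric.ball y (B.2 / 2 ^ k) ∧
        ∀ y ∈ F, ξ y (B.2 / 2 ^ k) ≤ D ^ k * ξ B.1 B.2 := by
      intro B
      by_cases h : 0 < B.2
      · obtain ⟨F, h1, h2, h3⟩ := aux_cover_iter hX ξ hξ k B.1 B.2 h
        exact ⟨F, fun _ => ⟨h1, h2, h3⟩⟩
      · exact ⟨∅, fun h' => absurd h' h⟩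
    choose F hF using hex
    set C' : Set (X × ℝ) := ⋃ B ∈ Cb, (fun y => (y, B.2 / 2 ^ k)) '' ↑(F B) with hC'
    have hmem : ∀ B ∈ Cb, ∀ y ∈ F B, (y, B.2 / 2 ^ k) ∈ C' := fun B hB y hy =>
      Set.mem_biUnion hB ⟨y, hy, rfl⟩
    have hcnt' : C'.Countable :=
      hcnt.biUnion (fun B _ => ((F B).finite_toSet.image _).countable)
    have h2k : (0 : ℝ) < 2 ^ k := by positivity
    have hrad' : ∀ B' ∈ C', 0 < B'.2 ∧ B'.2 ≤ r := by
      intro B' hB'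
      simp only [hC', Set.mem_iUnion, Set.mem_image, Finset.mem_coe] at hB'
      obtain ⟨B, hB, y, hy, hEq⟩ := hB'
      obtain ⟨hB2, hB2'⟩ := hrad B hB
      subst hEq
      refine ⟨by positivity, ?_⟩
      show B.2 / 2 ^ k ≤ r
      rw [div_le_iff₀ h2k]
      calc B.2 ≤ τ * r := hB2'
        _ ≤ 2 ^ k * r := by nlinarith
        _ = r * 2 ^ k := mul_comm _ _
    have hcov' : K ⊆ ⋃ B' ∈ C', Metric.ball B'.1 B'.2 := by
      intro z hz
      obtain ⟨B, hB, hzB⟩ := Set.mem_iUnion₂.mp (hcov hz)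
      obtain ⟨y, hy, hzy⟩ := Set.mem_iUnion₂.mp ((hF B (hrad B hB).1).2.1 hzB)
      exact Set.mem_iUnion₂.mpr ⟨(y, B.2 / 2 ^ k), hmem B hB y hy, hzy⟩
    have h1 : Paper.gaugeContent ξ r K ≤ Paper.gaugeSum ξ C' := by
      rw [Paper.gaugeContent]
      exact iInf_le_of_le C' (iInf_le_of_le hcnt' (iInf_le_of_le hrad'
        (iInf_le_of_le hcov' le_rfl)))
    have hdec : ∀ p : ↥C', ∃ q : Σ B : ↥Cb, {y // y ∈ F (B : X × ℝ)},
        (p : X × ℝ) = ((q.2 : X), ((q.1 : X × ℝ)).2 / 2 ^ k) := by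
      intro p
      have hp := p.2
      simp only [hC', Set.mem_iUnion, Set.mem_image, Finset.mem_coe] at hp
      obtain ⟨B, hB, y, hy, hEq⟩ := hp
      exact ⟨⟨⟨B, hB⟩, ⟨y, hy⟩⟩, hEq.symm⟩
    choose e he using hdec
    have hinj : Function.Injective e := by
      intro p q hpq
      apply Subtype.ext
      rw [he p, he q, hpq]
    have h2 : Paper.gaugeSum ξ C' ≤
        ∑' q : Σ B : ↥Cb, {y // y ∈ F (B : X × ℝ)},
          ξ (q.2 : X) ((q.1 : X × ℝ).2 / 2 ^ k) := by
      rw [Paper.gaugeSum]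
      refine ENNReal.summable.tsum_le_tsum_of_inj e hinj (fun c _ => zero_le) (fun p => ?_)
        ENNReal.summable
      rw [he p]
    have h3 : (∑' q : Σ B : ↥Cb, {y // y ∈ F (B : X × ℝ)},
          ξ (q.2 : X) ((q.1 : X × ℝ).2 / 2 ^ k)) =
        ∑' B : ↥Cb, ∑' y : {y // y ∈ F (B : X × ℝ)},
          ξ (y : X) ((B : X × ℝ).2 / 2 ^ k) :=
      ENNReal.tsum_sigma (fun (B : ↥Cb) (y : {y // y ∈ F (B : X × ℝ)}) => ξ (y : X) ((B : X × ℝ).2 / 2 ^ k))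
    have h4 : ∀ B : ↥Cb, (∑' y : {y // y ∈ F (B : X × ℝ)},
          ξ (y : X) ((B : X × ℝ).2 / 2 ^ k)) ≤ C * ξ (B : X × ℝ).1 (B : X × ℝ).2 := by
      intro B
      rw [show (∑' y : {y // y ∈ F (B : X × ℝ)}, ξ (y : X) ((B : X × ℝ).2 / 2 ^ k))
          = ∑ y ∈ F (B : X × ℝ), ξ y ((B : X × ℝ).2 / 2 ^ k) from Finset.tsum_subtype (F (B : X × ℝ)) (fun y => ξ y ((B : X × ℝ).2 / 2 ^ k))]
      obtain ⟨hc, _, hg⟩ := hF (B : X × ℝ) (hrad _ B.2).1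
      have hcard' : (((F (B : X × ℝ)).card : ℝ≥0∞)) ≤ ((N : ℝ≥0∞) + 1) ^ k := by
        calc (((F (B : X × ℝ)).card : ℝ≥0∞)) ≤ ((N ^ k : ℕ) : ℝ≥0∞) := Nat.cast_le.mpr hc
          _ ≤ (((N + 1) ^ k : ℕ) : ℝ≥0∞) :=
              Nat.cast_le.mpr (Nat.pow_le_pow_left (Nat.le_succ N) k)
          _ = ((N : ℝ≥0∞) + 1) ^ k := by push_cast; ring
      calc (∑ y ∈ F (B : X × ℝ), ξ y ((B : X × ℝ).2 / 2 ^ k))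
          ≤ (F (B : X × ℝ)).card • (D ^ k * ξ (B : X × ℝ).1 (B : X × ℝ).2) :=
            Finset.sum_le_card_nsmul _ _ _ hg
        _ = ((F (B : X × ℝ)).card : ℝ≥0∞) * (D ^ k * ξ (B : X × ℝ).1 (B : X × ℝ).2) :=
            nsmul_eq_mul _ _
        _ ≤ ((N : ℝ≥0∞) + 1) ^ k * (D ^ k * ξ (B : X × ℝ).1 (B : X × ℝ).2) :=
            mul_le_mul_left hcard' _
        _ = C * ξ (B : X × ℝ).1 (B : X × ℝ).2 := by rw [hC, mul_assoc]
    calc Paper.gaugeContent ξ r K ≤ Paper.gaugeSum ξ C' := h1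
      _ ≤ _ := h2
      _ = _ := h3
      _ ≤ ∑' B : ↥Cb, C * ξ (B : X × ℝ).1 (B : X × ℝ).2 := ENNReal.tsum_le_tsum h4
      _ = C * Paper.gaugeSum ξ Cb := by rw [ENNReal.tsum_mul_left, Paper.gaugeSum]
  have hdiv : Paper.gaugeContent ξ r K / C ≤ Paper.gaugeContent ξ (τ * r) K := by
    conv_rhs => rw [Paper.gaugeContent]
    refine le_iInf fun Cb => le_iInf fun hcnt => le_iInf fun hrad => le_iInf fun hcov => ?_
    rw [ENNReal.div_le_iff hC0 hCt]
    exact (key Cb hcnt hrad hcov).trans (le_of_eq (mul_comm _ _))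
  calc Paper.gaugeContent ξ r K
      = Paper.gaugeContent ξ r K / C * C := (ENNReal.div_mul_cancel hC0 hCt).symm
    _ ≤ Paper.gaugeContent ξ (τ * r) K * C := mul_le_mul_left hdiv C
    _ = C * Paper.gaugeContent ξ (τ * r) K := mul_comm _ _
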